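/- For p ∈ ℤ, let D_p ∈ End(ℂ((t))) be D_p(g) = −t^{p+1}·g'. For integers p, q and m ≥ 0, set ψ_m(p,q) := (coefficient of t^m in D_p(π₋(D_q(t^m)))) − (coefficient of t^m in D_q(π₋(D_p(t^m)))), where π₋ : ℂ((t)) → H₋ is the principal-part projection. Then the function m ↦ ψ_m(p,q) is finitely supported, and its sum equals −(p³−p)/6 if q = −p, and 0 if p + q ≠ 0. In other words, the canonical two-cocycle ψ of gl(H) restricts on the Witt algebra generators L_p = −t^{p+1}∂_t to ψ(L_p, L_q) = −(1/6)(p³−p)·δ_{p+q,0}, so that the cocycle −(1/2)ψ restricts on the Witt algebra to the Virasoro cocycle (1/12)(p³−p)·δ_{p+q,0}. -/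

import Mathlib

open HahnSeries

/-- Formal derivative on Laurent series: `(D f).coeff n = (n+1) * f.coeff (n+1)`. -/
noncomputable def D (f : LaurentSeries ℂ) : LaurentSeries ℂ where
  coeff := fun n => ((n + 1 : ℤ) : ℂ) * f.coeff (n + 1)
  isPWO_support' := by
    have himg : (Function.support fun n : ℤ => ((n + 1 : ℤ) : ℂ) * f.coeff (n + 1)) ⊆
        (fun n : ℤ => n - 1) '' f.support := by
      intro n hn
      have h : f.coeff (n + 1) ≠ 0 := by
        intro h
        simp [Function.mem_support, h] at hn
      exact ⟨n + 1, h, by ring⟩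
    exact (f.isPWO_support.image_of_monotone
      (fun a b hab => by simpa using sub_le_sub_right hab 1)).mono himg

/-- The residue pairing `⟨f,g⟩ = -Res_{t=0}(f·g')`, i.e. minus the coefficient of
`t⁻¹` in `f * D g`. -/
noncomputable def resPair (f g : LaurentSeries ℂ) : ℂ := -((f * D g).coeff (-1))
/-- Truncation to strictly negative degrees (the principal part). -/
noncomputable def truncNeg (f : LaurentSeries ℂ) : LaurentSeries ℂ where
  coeff := fun n => if n < 0 then f.coeff n else 0
  isPWO_support' := f.isPWO_support.mono (fun n hn => by
    simp only [Function.mem_support] at hn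
    by_cases h : n < 0
    · simp only [h, if_true] at hn
      exact hn
    · simp [h] at hn)

/-- Truncation to strictly positive degrees. -/
noncomputable def truncPos (f : LaurentSeries ℂ) : LaurentSeries ℂ where
  coeff := fun n => if 0 < n then f.coeff n else 0
  isPWO_support' := f.isPWO_support.mono (fun n hn => by
    simp only [Function.mem_support] at hn
    by_cases h : 0 < n
    · simp only [h, if_true] at hn
      exact hn
    · simp [h] at hn)

lemma truncNeg_coeff (f : LaurentSeries ℂ) (n : ℤ) :
    (truncNeg f).coeff n = if n < 0 then f.coeff n else 0 := rfl

/-- The Witt generator `D_p = L_p = -t^{p+1}∂_t` acting on `ℂ((t))`. -/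
noncomputable def Dp (p : ℤ) (g : LaurentSeries ℂ) : LaurentSeries ℂ :=
  -(HahnSeries.single (p + 1) (1 : ℂ) * D g)

/-- The diagonal matrix coefficient at `t^m` of `D_p ∘ π₋ ∘ D_q − D_q ∘ π₋ ∘ D_p`. -/
noncomputable def psiWitt (p q : ℤ) (m : ℕ) : ℂ :=
  (Dp p (truncNeg (Dp q (HahnSeries.single (m : ℤ) (1 : ℂ))))).coeff (m : ℤ) -
    (Dp q (truncNeg (Dp p (HahnSeries.single (m : ℤ) (1 : ℂ))))).coeff (m : ℤ)

lemma D_single (k : ℤ) (c : ℂ) :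
    D (HahnSeries.single k c) = HahnSeries.single (k - 1) ((k : ℂ) * c) := by
  ext n
  simp only [D, HahnSeries.coeff_single]
  by_cases h : n = k - 1
  · have : n + 1 = k := by omega
    simp [h, this]
  · have : ¬ (n + 1 = k) := by omega
    simp [h, this]

lemma Dp_single (p k : ℤ) (c : ℂ) :
    Dp p (HahnSeries.single k c) = HahnSeries.single (p + k) (-((k : ℂ) * c)) := by
  unfold Dp
  rw [D_single, HahnSeries.single_mul_single]
  ext n
  rw [HahnSeries.coeff_neg]
  simp only [HahnSeries.coeff_single]
  have : p + 1 + (k - 1) = p + k := by ring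
  rw [this]
  split_ifs <;> simp

lemma Dp_zero (p : ℤ) : Dp p (0 : LaurentSeries ℂ) = 0 := by
  have : D (0 : LaurentSeries ℂ) = 0 := by
    ext n; simp [D]
  simp [Dp, this]

lemma truncNeg_single (k : ℤ) (c : ℂ) :
    truncNeg (HahnSeries.single k c) =
      if k < 0 then HahnSeries.single k c else 0 := by
  ext n
  rw [truncNeg_coeff]
  simp only [HahnSeries.coeff_single]
  by_cases h2 : k < 0
  · rw [if_pos h2, HahnSeries.coeff_single]
    split_ifs with h1 h3 <;> first | rfl | (exfalso; omega)
  · rw [if_neg h2]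
    by_cases h1 : n < 0
    · have h3 : n ≠ k := by omega
      simp [if_pos h1, HahnSeries.coeff_single, h3]
    · rw [if_neg h1]
      simp

lemma psiWitt_eq (p q : ℤ) (m : ℕ) :
    psiWitt p q m =
      (if (m : ℤ) = p + q + m ∧ q + m < 0 then ((q : ℂ) + m) * m else 0) -
      (if (m : ℤ) = p + q + m ∧ p + m < 0 then ((p : ℂ) + m) * m else 0) := by
  unfold psiWitt
  have key : ∀ a b : ℤ, (Dp a (truncNeg (Dp b (HahnSeries.single (m : ℤ) (1 : ℂ))))).coeff (m : ℤ)
      = if (m : ℤ) = a + b + m ∧ b + m < 0 then ((b : ℂ) + m) * m else 0 := by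
    intro a b
    rw [Dp_single, truncNeg_single]
    split_ifs with h1 h2 h3
    · rw [Dp_single, HahnSeries.coeff_single]
      have : a + (b + ↑m) = a + b + m := by ring
      rw [this]
      rw [if_pos h2.1]
      push_cast
      try ring
    · rw [Dp_single, HahnSeries.coeff_single]
      have : a + (b + ↑m) = a + b + m := by ring
      rw [this, if_neg]
      intro h
      exact h2 ⟨h, h1⟩
    · exact absurd h3.2 h1
    · simp [Dp_zero]
  rw [key, key]
  have h : q + p + (m : ℤ) = p + q + m := by ring
  rw [h]

lemma sum_id (n : ℕ) : ∑ m ∈ Finset.range n, (m : ℂ) = (n : ℂ) * ((n : ℂ) - 1) / 2 := by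
  induction n with
  | zero => simp
  | succ n ih =>
    rw [Finset.sum_range_succ, ih]
    push_cast
    ring

lemma sum_key (n : ℕ) :
    ∑ m ∈ Finset.range n, (((m : ℂ) - (n : ℂ)) * (m : ℂ)) = -(((n : ℂ) ^ 3 - (n : ℂ)) / 6) := by
  induction n with
  | zero => simp
  | succ n ih =>
    have h1 : ∀ m : ℕ, (((m : ℂ) - ((n + 1 : ℕ) : ℂ)) * (m : ℂ))
        = ((m : ℂ) - (n : ℂ)) * (m : ℂ) - (m : ℂ) := by
      intro m; push_cast; ring
    rw [Finset.sum_congr rfl (fun m _ => h1 m), Finset.sum_sub_distrib,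
      Finset.sum_range_succ (f := fun m => ((m : ℂ) - (n : ℂ)) * (m : ℂ)), ih, sum_id]
    push_cast
    ring

/-- the diagonal coefficients computing the canonical two-cocycle
`ψ(L_p, L_q) = Tr(π₊L_pπ₋L_qπ₊ − π₊L_qπ₋L_pπ₊)` on the Witt generators are finitely
supported over the monomial basis `{t^m : m ≥ 0}` of `H₊`, and their sum equals
`−(p³−p)/6` if `q = −p` and `0` if `p + q ≠ 0`; i.e. `ψ` restricts on the Witt
algebra to `−2·`(Virasoro cocycle). -/
theorem psi_on_Witt_generators (p q : ℤ) :
    (Function.support fun m : ℕ => psiWitt p q m).Finite ∧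
    ∑ᶠ m : ℕ, psiWitt p q m =
      if q = -p then -(((p : ℂ) ^ 3 - (p : ℂ)) / 6) else 0 := by
  by_cases hq : q = -p
  · subst hq
    rw [if_pos rfl]
    have heq : ∀ m : ℕ, psiWitt p (-p) m =
        (if (m : ℤ) < p then ((m : ℂ) - (p : ℂ)) * m else 0) -
        (if (m : ℤ) < -p then ((p : ℂ) + m) * m else 0) := by
      intro m
      rw [psiWitt_eq]
      congr 1
      · have h : ((m : ℤ) = p + -p + m ∧ -p + m < 0) ↔ (m : ℤ) < p := by
          constructor
          · rintro ⟨_, h2⟩; omega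
          · intro h; exact ⟨by ring, by omega⟩
        simp only [h]
        split_ifs with hh
        · push_cast; ring
        · rfl
      · have h : ((m : ℤ) = p + -p + m ∧ p + m < 0) ↔ (m : ℤ) < -p := by
          constructor
          · rintro ⟨_, h2⟩; omega
          · intro h; exact ⟨by ring, by omega⟩
        simp only [h]
    have hsupp : (Function.support fun m : ℕ => psiWitt p (-p) m) ⊆
        ↑(Finset.range p.natAbs) := by
      intro m hm
      simp only [Function.mem_support] at hm
      simp only [Finset.coe_range, Set.mem_Iio]
      by_contra hcon
      push_neg at hcon
      have h1 : ¬ ((m : ℤ) < p) := by omega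
      have h2 : ¬ ((m : ℤ) < -p) := by omega
      rw [heq m, if_neg h1, if_neg h2, sub_zero] at hm
      exact hm rfl
    refine ⟨Set.Finite.subset (Finset.range p.natAbs).finite_toSet hsupp, ?_⟩
    rw [finsum_eq_sum_of_support_subset _ hsupp]
    rcases le_or_gt 0 p with hp | hp
    · obtain ⟨n, rfl⟩ : ∃ n : ℕ, p = (n : ℤ) := ⟨p.toNat, by omega⟩
      rw [Int.natAbs_natCast]
      have hc : ∀ m ∈ Finset.range n, psiWitt (n : ℤ) (-(n : ℤ)) m
          = ((m : ℂ) - (n : ℂ)) * (m : ℂ) := by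
        intro m hm
        simp only [Finset.mem_range] at hm
        rw [heq m, if_pos (by omega), if_neg (by omega), sub_zero]
        push_cast
        ring
      rw [Finset.sum_congr rfl hc, sum_key]
      push_cast
      ring
    · obtain ⟨n, rfl⟩ : ∃ n : ℕ, p = -(n : ℤ) := ⟨p.natAbs, by omega⟩
      rw [Int.natAbs_neg, Int.natAbs_natCast]
      have hc : ∀ m ∈ Finset.range n, psiWitt (-(n : ℤ)) (-(-(n : ℤ))) m
          = -(((m : ℂ) - (n : ℂ)) * (m : ℂ)) := by
        intro m hm
        simp only [Finset.mem_range] at hm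
        rw [heq m, if_neg (by omega), if_pos (by omega), zero_sub]
        push_cast
        ring
      rw [Finset.sum_congr rfl hc, Finset.sum_neg_distrib, sum_key]
      push_cast
      ring
  · rw [if_neg hq]
    have heq : ∀ m : ℕ, psiWitt p q m = 0 := by
      intro m
      rw [psiWitt_eq]
      rw [if_neg (by rintro ⟨h, _⟩; exact hq (by omega)),
        if_neg (by rintro ⟨h, _⟩; exact hq (by omega)), sub_zero]
    constructor
    · simp [Function.support, heq]
    · simp only [heq, finsum_zero]
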